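/- arXiv:2009.02551 — 8 statements merged into one kernel-verified Lean document; each statement's English description precedes it below -/
import Mathlib

section
/- Suppose exactly one IRS i ∈ 𝒥 is associated with user k, so the average SINR of user k as a function of the (real) number M ≥ 0 of reflecting elements per IRS is γ_k(M) = P_k(α²_{k,k} + M·B_k + (π² M²/16) q²_{k,i,k}) / (D_k + M·C_k), where B_k = Σ_{j∈𝒥} q²_{k,j,k} + (π^{3/2} α_{k,k}/4) q_{k,i,k} − q²_{k,i,k}, C_k = Σ_{n∈𝒦,n≠k} P_n Σ_{j∈𝒥} q²_{n,j,k}, and D_k = σ² + Σ_{n∈𝒦,n≠k} P_n α²_{n,k}. If C_k·α²_{k,k} ≤ B_k·D_k, then γ_k is monotonically increasing in M on [0,∞), i.e., for all 0 ≤ M₁ < M₂ one has γ_k(M₁) < γ_k(M₂). (Proposition 3, monotone case.) -/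
/-- Proposition 3 (monotone case): with exactly one IRS `i` associated with user `k`,
if `C_k α²_{k,k} ≤ B_k D_k`, then the average SINR `γ` of user `k` is monotonically
increasing in the (real) number `M ≥ 0` of reflecting elements per IRS. -/
theorem stmt_3
    {K J : Type*} [Fintype K] [DecidableEq K] [Fintype J] [Nonempty J]
    (hK : 1 < Fintype.card K)
    (P : K → ℝ) (hP : ∀ n, 0 < P n)
    (σ2 : ℝ) (hσ : 0 < σ2)
    (α : K → K → ℝ) (hα : ∀ n k, 0 < α n k)
    (q : K → J → K → ℝ) (hq : ∀ n j k, 0 < q n j k)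
    (k : K) (i : J)
    (B C D : ℝ)
    (hB : B = ∑ j, (q k j k) ^ 2
      + Real.pi * Real.sqrt Real.pi * α k k / 4 * q k i k - (q k i k) ^ 2)
    (hC : C = ∑ n ∈ Finset.univ.erase k, P n * ∑ j, (q n j k) ^ 2)
    (hD : D = σ2 + ∑ n ∈ Finset.univ.erase k, P n * (α n k) ^ 2)
    (γ : ℝ → ℝ)
    (hγ : ∀ M : ℝ, γ M =
      P k * ((α k k) ^ 2 + M * B + Real.pi ^ 2 * M ^ 2 / 16 * (q k i k) ^ 2) / (D + M * C))
    (hcond : C * (α k k) ^ 2 ≤ B * D) :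
    ∀ M1 M2 : ℝ, 0 ≤ M1 → M1 < M2 → γ M1 < γ M2 := by
  have hD0 : 0 < D := by
    rw [hD]
    have : (0:ℝ) ≤ ∑ n ∈ Finset.univ.erase k, P n * (α n k) ^ 2 :=
      Finset.sum_nonneg fun n _ => mul_nonneg (hP n).le (sq_nonneg _)
    linarith
  have hC0 : 0 ≤ C := by
    rw [hC]
    exact Finset.sum_nonneg fun n _ =>
      mul_nonneg (hP n).le (Finset.sum_nonneg fun j _ => sq_nonneg _)
  have hB0 : 0 < B := by
    rw [hB]
    have h1 : (q k i k) ^ 2 ≤ ∑ j, (q k j k) ^ 2 :=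
      Finset.single_le_sum (f := fun j => (q k j k) ^ 2) (fun j _ => sq_nonneg _) (Finset.mem_univ i)
    have h2 : 0 < Real.pi * Real.sqrt Real.pi * α k k / 4 * q k i k := by
      have := Real.pi_pos
      have := Real.sqrt_pos.mpr Real.pi_pos
      have := hα k k
      have := hq k i k
      positivity
    linarith
  intro M1 M2 h1 h2
  have h10 : 0 ≤ M2 := le_of_lt (lt_of_le_of_lt h1 h2)
  have hd1 : 0 < D + M1 * C := by nlinarith
  have hd2 : 0 < D + M2 * C := by nlinarith
  rw [hγ, hγ, div_lt_div_iff₀ hd1 hd2]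
  have hc : 0 < Real.pi ^ 2 / 16 * (q k i k) ^ 2 := by
    have := Real.pi_pos
    have := hq k i k
    positivity
  have hPk := hP k
  nlinarith [mul_pos hPk (mul_pos hc (mul_pos hD0 (sub_pos.mpr h2))),
    mul_nonneg (mul_nonneg hPk.le (sub_pos.mpr h2).le) (sub_nonneg.mpr hcond),
    mul_nonneg (mul_nonneg (mul_nonneg hPk.le hc.le) (mul_nonneg (mul_nonneg h1 h10) hC0)) (sub_pos.mpr h2).le,
    mul_pos (mul_pos hPk (mul_pos hc hD0)) (mul_pos (lt_of_le_of_lt h1 h2) (sub_pos.mpr h2)),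
    mul_nonneg (mul_nonneg (mul_nonneg hPk.le hc.le) hD0.le) (mul_nonneg h1 (sub_pos.mpr h2).le)]
end

section
/- Suppose exactly one IRS i ∈ 𝒥 is associated with user k, so the average SINR of user k as a function of the (real) number M ≥ 0 of reflecting elements per IRS is γ_k(M) = P_k(α²_{k,k} + M·B_k + (π² M²/16) q²_{k,i,k}) / (D_k + M·C_k), where B_k = Σ_{j∈𝒥} q²_{k,j,k} + (π^{3/2} α_{k,k}/4) q_{k,i,k} − q²_{k,i,k}, C_k = Σ_{n∈𝒦,n≠k} P_n Σ_{j∈𝒥} q²_{n,j,k}, and D_k = σ² + Σ_{n∈𝒦,n≠k} P_n α²_{n,k}. If C_k·α²_{k,k} > B_k·D_k, then with M* = √(D_k²/C_k² + 16(C_k·α²_{k,k} − B_k·D_k)/(π² q²_{k,i,k} C_k)) − D_k/C_k, the function γ_k is strictly decreasing on [0, M*] and strictly increasing on [M*, ∞). (Proposition 3, non-monotone case.) -/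
set_option maxHeartbeats 1000000


/-- Proposition 3 (non-monotone case): with exactly one IRS `i` associated with user `k`,
if `C_k α²_{k,k} > B_k D_k`, then the average SINR `γ` of user `k` first strictly
decreases on `[0, M*]` and then strictly increases on `[M*, ∞)`, where
`M* = √(D²/C² + 16(C α² − B D)/(π² q²_{k,i,k} C)) − D/C`. -/
theorem stmt_4
    {K J : Type*} [Fintype K] [DecidableEq K] [Fintype J] [Nonempty J]
    (hK : 1 < Fintype.card K)
    (P : K → ℝ) (hP : ∀ n, 0 < P n)
    (σ2 : ℝ) (hσ : 0 < σ2)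
    (α : K → K → ℝ) (hα : ∀ n k, 0 < α n k)
    (q : K → J → K → ℝ) (hq : ∀ n j k, 0 < q n j k)
    (k : K) (i : J)
    (B C D : ℝ)
    (hB : B = ∑ j, (q k j k) ^ 2
      + Real.pi * Real.sqrt Real.pi * α k k / 4 * q k i k - (q k i k) ^ 2)
    (hC : C = ∑ n ∈ Finset.univ.erase k, P n * ∑ j, (q n j k) ^ 2)
    (hD : D = σ2 + ∑ n ∈ Finset.univ.erase k, P n * (α n k) ^ 2)
    (γ : ℝ → ℝ)
    (hγ : ∀ M : ℝ, γ M =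
      P k * ((α k k) ^ 2 + M * B + Real.pi ^ 2 * M ^ 2 / 16 * (q k i k) ^ 2) / (D + M * C))
    (hcond : C * (α k k) ^ 2 > B * D)
    (Mstar : ℝ)
    (hMstar : Mstar = Real.sqrt (D ^ 2 / C ^ 2
      + 16 * (C * (α k k) ^ 2 - B * D) / (Real.pi ^ 2 * (q k i k) ^ 2 * C)) - D / C) :
    StrictAntiOn γ (Set.Icc 0 Mstar) ∧ StrictMonoOn γ (Set.Ici Mstar) := by
  have hγfun : γ = fun M => P k * ((α k k) ^ 2 + M * B
      + Real.pi ^ 2 * M ^ 2 / 16 * (q k i k) ^ 2) / (D + M * C) := funext hγ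
  subst hγfun
  have hq0 : 0 < q k i k := hq k i k
  have hpi : 0 < Real.pi := Real.pi_pos
  have hPk : 0 < P k := hP k
  have hC0 : 0 < C := by
    rw [hC]
    apply Finset.sum_pos
    · intro n _
      exact mul_pos (hP n)
        (Finset.sum_pos (fun j _ => pow_pos (hq n j k) 2) Finset.univ_nonempty)
    · obtain ⟨n, hn⟩ := Fintype.exists_ne_of_one_lt_card hK k
      exact ⟨n, Finset.mem_erase.mpr ⟨hn, Finset.mem_univ n⟩⟩
  have hD0 : 0 < D := by
    rw [hD]
    have : 0 ≤ ∑ n ∈ Finset.univ.erase k, P n * (α n k) ^ 2 :=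
      Finset.sum_nonneg fun n _ => le_of_lt (mul_pos (hP n) (pow_pos (hα n k) 2))
    linarith
  set Q : ℝ := Real.pi ^ 2 * (q k i k) ^ 2 / 16 with hQdef
  have hQ0 : 0 < Q := by rw [hQdef]; positivity
  set E : ℝ := C * (α k k) ^ 2 - B * D with hEdef
  have hE : 0 < E := by rw [hEdef]; linarith
  set s : ℝ := D ^ 2 / C ^ 2 + 16 * E / (Real.pi ^ 2 * (q k i k) ^ 2 * C) with hs
  have h2 : 0 < 16 * E / (Real.pi ^ 2 * (q k i k) ^ 2 * C) :=
    div_pos (by linarith) (by positivity)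
  have hs0 : 0 < s := by
    rw [hs]
    have : 0 ≤ D ^ 2 / C ^ 2 := by positivity
    linarith
  set R : ℝ := Real.sqrt s with hR
  have hR2 : R ^ 2 = s := Real.sq_sqrt hs0.le
  have hRpos : 0 < R := Real.sqrt_pos.mpr hs0
  have hDC : 0 < D / C := div_pos hD0 hC0
  have hMs : Mstar = R - D / C := hMstar
  have hDCsq : D ^ 2 / C ^ 2 = (D / C) ^ 2 := by rw [div_pow]
  have hMspos : 0 < Mstar := by
    rw [hMs]
    have hlt : (D / C) ^ 2 < s := by rw [hs]; linarith
    have : D / C < R := by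
      rw [hR]
      exact (Real.lt_sqrt hDC.le).mpr hlt
    linarith
  -- sign of the quadratic
  have hEeq : E = Q * C * (s - D ^ 2 / C ^ 2) := by
    rw [hs, hQdef]
    field_simp
    ring
  have hg : ∀ x : ℝ, Q * C * x ^ 2 + 2 * Q * D * x - E
      = Q * C * ((x + D / C) ^ 2 - R ^ 2) := by
    intro x
    rw [hR2, hEeq]
    field_simp
    ring
  have hQC : 0 < Q * C := mul_pos hQ0 hC0
  -- derivative
  have hderiv : ∀ x : ℝ, 0 < D + x * C →
      deriv (fun M => P k * ((α k k) ^ 2 + M * B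
        + Real.pi ^ 2 * M ^ 2 / 16 * (q k i k) ^ 2) / (D + M * C)) x
      = P k * (Q * C * x ^ 2 + 2 * Q * D * x - E) / (D + x * C) ^ 2 := by
    intro x hden
    have hnum : HasDerivAt (fun M : ℝ => P k * ((α k k) ^ 2 + M * B
        + Real.pi ^ 2 * M ^ 2 / 16 * (q k i k) ^ 2))
        (P k * (B + Real.pi ^ 2 * (2 * x) / 16 * (q k i k) ^ 2)) x := by
      have ha : HasDerivAt (fun M : ℝ => M * B) B x := by
        simpa using (hasDerivAt_id x).mul_const B
      have hb : HasDerivAt (fun M : ℝ => Real.pi ^ 2 * M ^ 2 / 16 * (q k i k) ^ 2)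
          (Real.pi ^ 2 * (2 * x) / 16 * (q k i k) ^ 2) x := by
        have h0 : HasDerivAt (fun M : ℝ => M ^ 2) (2 * x) x := by
          simpa using hasDerivAt_pow 2 x
        exact ((h0.const_mul (Real.pi ^ 2)).div_const 16).mul_const ((q k i k) ^ 2)
      exact ((ha.const_add ((α k k) ^ 2)).add hb).const_mul (P k)
    have hden' : HasDerivAt (fun M : ℝ => D + M * C) C x := by
      simpa using ((hasDerivAt_id x).mul_const C).const_add D
    have hdiv : HasDerivAt (fun M => P k * ((α k k) ^ 2 + M * B
        + Real.pi ^ 2 * M ^ 2 / 16 * (q k i k) ^ 2) / (D + M * C))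
        ((P k * (B + Real.pi ^ 2 * (2 * x) / 16 * (q k i k) ^ 2) * (D + x * C) -
          P k * ((α k k) ^ 2 + x * B + Real.pi ^ 2 * x ^ 2 / 16 * (q k i k) ^ 2) * C) /
          (D + x * C) ^ 2) x := hnum.div hden' hden.ne'
    rw [hdiv.deriv]
    rw [hQdef, hEdef]
    field_simp
    ring
  -- continuity
  have hcont : ∀ t : Set ℝ, (∀ x ∈ t, (0 : ℝ) ≤ x) →
      ContinuousOn (fun M => P k * ((α k k) ^ 2 + M * B
        + Real.pi ^ 2 * M ^ 2 / 16 * (q k i k) ^ 2) / (D + M * C)) t := by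
    intro t ht
    apply ContinuousOn.div
    · fun_prop
    · fun_prop
    · intro x hx
      have hx0 := ht x hx
      have : 0 < D + x * C := by nlinarith
      exact this.ne'
  constructor
  · apply strictAntiOn_of_deriv_neg (convex_Icc 0 Mstar)
    · exact hcont _ (fun x hx => hx.1)
    · intro x hx
      rw [interior_Icc] at hx
      have hx0 : 0 < x := hx.1
      have hden : 0 < D + x * C := by nlinarith
      rw [hderiv x hden]
      have hxR : x + D / C < R := by
        have := hx.2
        rw [hMs] at this
        linarith
      have hsq : (x + D / C) ^ 2 < R ^ 2 := by nlinarith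
      have hgneg : Q * C * x ^ 2 + 2 * Q * D * x - E < 0 := by
        rw [hg x]; nlinarith
      exact div_neg_of_neg_of_pos (mul_neg_of_pos_of_neg hPk hgneg) (pow_pos hden 2)
  · apply strictMonoOn_of_deriv_pos (convex_Ici Mstar)
    · exact hcont _ (fun x hx => le_trans hMspos.le hx)
    · intro x hx
      rw [interior_Ici] at hx
      have hx0 : 0 < x := lt_trans hMspos hx
      have hden : 0 < D + x * C := by nlinarith
      rw [hderiv x hden]
      have hxR : R < x + D / C := by
        have hxM : Mstar < x := hx
        rw [hMs] at hxM
        linarith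
      have hsq : R ^ 2 < (x + D / C) ^ 2 := by nlinarith
      have hgpos : 0 < Q * C * x ^ 2 + 2 * Q * D * x - E := by
        rw [hg x]; nlinarith
      exact div_pos (mul_pos hPk hgpos) (pow_pos hden 2)
end

section
/- Suppose exactly one IRS i ∈ 𝒥 is associated with user k, so the average SINR of user k with M reflecting elements per IRS is γ_k(M) = P_k(α²_{k,k} + M·B_k + (π² M²/16) q²_{k,i,k}) / (D_k + M·C_k), where B_k = Σ_{j∈𝒥} q²_{k,j,k} + (π^{3/2} α_{k,k}/4) q_{k,i,k} − q²_{k,i,k}, C_k = Σ_{n∈𝒦,n≠k} P_n Σ_{j∈𝒥} q²_{n,j,k}, and D_k = σ² + Σ_{n∈𝒦,n≠k} P_n α²_{n,k}, and let γ_{k,0} = P_k α²_{k,k} / D_k denote the SINR of user k in the benchmark system without IRS. If the real number M satisfies M > max{ (16/π²)(α²_{k,k} C_k/(q²_{k,i,k} D_k) − B_k/q²_{k,i,k}), 0 }, then γ_k(M) > γ_{k,0}. (Threshold condition (25) for outperforming the no-IRS benchmark.) -/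
/-- Threshold condition (25): with exactly one IRS `i` associated with user `k`, if
`M > max{(16/π²)(α²_{k,k} C_k/(q²_{k,i,k} D_k) − B_k/q²_{k,i,k}), 0}`, then the average
SINR `γ(M)` of user `k` exceeds the no-IRS benchmark SINR `γ_{k,0} = P_k α²_{k,k}/D_k`. -/
theorem stmt_6
    {K J : Type*} [Fintype K] [DecidableEq K] [Fintype J] [Nonempty J]
    (hK : 1 < Fintype.card K)
    (P : K → ℝ) (hP : ∀ n, 0 < P n)
    (σ2 : ℝ) (hσ : 0 < σ2)
    (α : K → K → ℝ) (hα : ∀ n k, 0 < α n k)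
    (q : K → J → K → ℝ) (hq : ∀ n j k, 0 < q n j k)
    (k : K) (i : J)
    (B C D : ℝ)
    (hB : B = ∑ j, (q k j k) ^ 2
      + Real.pi * Real.sqrt Real.pi * α k k / 4 * q k i k - (q k i k) ^ 2)
    (hC : C = ∑ n ∈ Finset.univ.erase k, P n * ∑ j, (q n j k) ^ 2)
    (hD : D = σ2 + ∑ n ∈ Finset.univ.erase k, P n * (α n k) ^ 2)
    (γ : ℝ → ℝ)
    (hγ : ∀ M : ℝ, γ M =
      P k * ((α k k) ^ 2 + M * B + Real.pi ^ 2 * M ^ 2 / 16 * (q k i k) ^ 2) / (D + M * C))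
    (M : ℝ)
    (hM : M > max (16 / Real.pi ^ 2
      * ((α k k) ^ 2 * C / ((q k i k) ^ 2 * D) - B / (q k i k) ^ 2)) 0) :
    γ M > P k * (α k k) ^ 2 / D := by
  have hpi : (0:ℝ) < Real.pi := Real.pi_pos
  have hM0 : 0 < M := lt_of_le_of_lt (le_max_right _ 0) hM
  have hqk : 0 < (q k i k) ^ 2 := pow_pos (hq k i k) 2
  have hD0 : 0 < D := by
    have hs : 0 ≤ ∑ n ∈ Finset.univ.erase k, P n * (α n k) ^ 2 :=
      Finset.sum_nonneg fun n _ => mul_nonneg (hP n).le (sq_nonneg _)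
    rw [hD]; linarith
  have hC0 : 0 ≤ C := by
    rw [hC]
    exact Finset.sum_nonneg fun n _ =>
      mul_nonneg (hP n).le (Finset.sum_nonneg fun j _ => sq_nonneg _)
  have hden : 0 < D + M * C := by nlinarith
  have hthr : 16 / Real.pi ^ 2
      * ((α k k) ^ 2 * C / ((q k i k) ^ 2 * D) - B / (q k i k) ^ 2) < M :=
    lt_of_le_of_lt (le_max_left _ _) hM
  have h3 : 16 * ((α k k) ^ 2 * C / ((q k i k) ^ 2 * D) - B / (q k i k) ^ 2)
      < M * Real.pi ^ 2 := by
    rw [div_mul_eq_mul_div, div_lt_iff₀ (pow_pos hpi 2)] at hthr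
    linarith
  have h4 : 16 * ((α k k) ^ 2 * C) - 16 * (B * D)
      < M * Real.pi ^ 2 * ((q k i k) ^ 2 * D) := by
    have e : 16 * ((α k k) ^ 2 * C / ((q k i k) ^ 2 * D) - B / (q k i k) ^ 2)
        * ((q k i k) ^ 2 * D) = 16 * ((α k k) ^ 2 * C) - 16 * (B * D) := by
      field_simp [(hq k i k).ne']
    calc 16 * ((α k k) ^ 2 * C) - 16 * (B * D)
        = 16 * ((α k k) ^ 2 * C / ((q k i k) ^ 2 * D) - B / (q k i k) ^ 2)
          * ((q k i k) ^ 2 * D) := e.symm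
      _ < M * Real.pi ^ 2 * ((q k i k) ^ 2 * D) :=
          mul_lt_mul_of_pos_right h3 (mul_pos hqk hD0)
  rw [hγ, gt_iff_lt, div_lt_div_iff₀ hD0 hden]
  have h5 := mul_lt_mul_of_pos_left h4 (by have := hP k; positivity : (0:ℝ) < P k * M / 16)
  nlinarith [h5]
end

section
/- Suppose exactly one IRS i ∈ 𝒥 is associated with user k, so the average SINR of user k with M reflecting elements per IRS is γ_k(M) = P_k(α²_{k,k} + M·B_k + (π² M²/16) q²_{k,i,k}) / (D_k + M·C_k), where B_k = Σ_{j∈𝒥} q²_{k,j,k} + (π^{3/2} α_{k,k}/4) q_{k,i,k} − q²_{k,i,k}, C_k = Σ_{n∈𝒦,n≠k} P_n Σ_{j∈𝒥} q²_{n,j,k}, and D_k = σ² + Σ_{n∈𝒦,n≠k} P_n α²_{n,k}, and let γ_{k,0} = P_k α²_{k,k} / D_k denote the SINR of user k in the benchmark system without IRS. If the real number M satisfies the relaxed bound M > 16 α²_{k,k} C_k / (π² q²_{k,i,k} D_k), then γ_k(M) > γ_{k,0}. (Relaxed threshold condition (26).) -/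
/-- Relaxed threshold condition (26): with exactly one IRS `i` associated with user `k`,
if `M > 16 α²_{k,k} C_k / (π² q²_{k,i,k} D_k)`, then the average SINR `γ(M)` of user `k`
exceeds the no-IRS benchmark SINR `γ_{k,0} = P_k α²_{k,k}/D_k`. -/
theorem stmt_7
    {K J : Type*} [Fintype K] [DecidableEq K] [Fintype J] [Nonempty J]
    (hK : 1 < Fintype.card K)
    (P : K → ℝ) (hP : ∀ n, 0 < P n)
    (σ2 : ℝ) (hσ : 0 < σ2)
    (α : K → K → ℝ) (hα : ∀ n k, 0 < α n k)
    (q : K → J → K → ℝ) (hq : ∀ n j k, 0 < q n j k)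
    (k : K) (i : J)
    (B C D : ℝ)
    (hB : B = ∑ j, (q k j k) ^ 2
      + Real.pi * Real.sqrt Real.pi * α k k / 4 * q k i k - (q k i k) ^ 2)
    (hC : C = ∑ n ∈ Finset.univ.erase k, P n * ∑ j, (q n j k) ^ 2)
    (hD : D = σ2 + ∑ n ∈ Finset.univ.erase k, P n * (α n k) ^ 2)
    (γ : ℝ → ℝ)
    (hγ : ∀ M : ℝ, γ M =
      P k * ((α k k) ^ 2 + M * B + Real.pi ^ 2 * M ^ 2 / 16 * (q k i k) ^ 2) / (D + M * C))
    (M : ℝ)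
    (hM : M > 16 * (α k k) ^ 2 * C / (Real.pi ^ 2 * (q k i k) ^ 2 * D)) :
    γ M > P k * (α k k) ^ 2 / D := by
  have hpi := Real.pi_pos
  have hsq : 0 < Real.sqrt Real.pi := Real.sqrt_pos.mpr hpi
  have hD0 : 0 < D := by
    rw [hD]
    have : 0 ≤ ∑ n ∈ Finset.univ.erase k, P n * (α n k) ^ 2 :=
      Finset.sum_nonneg fun n _ => mul_nonneg (hP n).le (sq_nonneg _)
    linarith
  obtain ⟨m, hm⟩ := Fintype.exists_ne_of_one_lt_card hK k
  have hC0 : 0 < C := by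
    rw [hC]
    apply Finset.sum_pos
    · intro n _
      have : 0 < ∑ j, (q n j k) ^ 2 :=
        Finset.sum_pos (fun j _ => pow_pos (hq n j k) 2) Finset.univ_nonempty
      exact mul_pos (hP n) this
    · exact ⟨m, Finset.mem_erase.mpr ⟨hm, Finset.mem_univ m⟩⟩
  have hB0 : 0 < B := by
    rw [hB]
    have h1 : (q k i k) ^ 2 ≤ ∑ j, (q k j k) ^ 2 :=
      Finset.single_le_sum (f := fun j => (q k j k) ^ 2)
        (fun j _ => by positivity) (Finset.mem_univ i)
    have h2 : 0 < Real.pi * Real.sqrt Real.pi * α k k / 4 * q k i k := by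
      have := hα k k; have := hq k i k; positivity
    linarith
  have hq0 := hq k i k
  have hα0 := hα k k
  have hM0 : 0 < M := lt_of_le_of_lt (by positivity) hM
  have hden : 0 < D + M * C := by positivity
  rw [hγ, gt_iff_lt, div_lt_div_iff₀ hD0 hden]
  have hPk := hP k
  have key : 16 * (α k k) ^ 2 * C < M * (Real.pi ^ 2 * (q k i k) ^ 2 * D) := by
    rw [gt_iff_lt, div_lt_iff₀ (by positivity)] at hM
    linarith
  nlinarith [mul_pos (mul_pos hPk hM0) (mul_pos hB0 hD0), mul_pos hPk hM0]
end

section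
/- Let λ_j ∈ {0,1} for j ∈ 𝒥 indicate which IRSs are associated with user k, and suppose Σ_{j∈𝒥} λ_j q_{k,j,k} > 0 (at least one IRS is associated). With M reflecting elements per IRS, the average SINR of user k is γ_k(M) = P_k·α̃²_{k,k}(λ, M) / (D_k + M·C_k), where α̃²_{k,k}(λ, M) = α²_{k,k} + M(Σ_{j∈𝒥} q²_{k,j,k} + Σ_{j∈𝒥} λ_j A_{j,k}) + (M²π²/16)(Σ_{j∈𝒥} λ_j q_{k,j,k})², A_{j,k} = (π^{3/2} α_{k,k}/4) q_{k,j,k} − q²_{k,j,k}, C_k = Σ_{n∈𝒦,n≠k} P_n Σ_{j∈𝒥} q²_{n,j,k}, and D_k = σ² + Σ_{n∈𝒦,n≠k} P_n α²_{n,k}. If the real number M satisfies M > 16 α²_{k,k} C_k / (π² (Σ_{j∈𝒥} λ_j q_{k,j,k})² D_k), then γ_k(M) > γ_{k,0}, where γ_{k,0} = P_k α²_{k,k} / D_k is the SINR of user k in the benchmark system without IRS. (Generalized threshold condition (27) with multiple associated IRSs.) -/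
/-- Generalized threshold condition (27) with multiple associated IRSs: if a binary
association vector `lam` with `Σ_j lam_j q_{k,j,k} > 0` is used for user `k` and
`M > 16 α²_{k,k} C_k / (π² (Σ_j lam_j q_{k,j,k})² D_k)`, then the average SINR `γ(M)`
of user `k` exceeds the no-IRS benchmark SINR `γ_{k,0} = P_k α²_{k,k}/D_k`. -/
theorem stmt_8
    {K J : Type*} [Fintype K] [DecidableEq K] [Fintype J] [Nonempty J]
    (hK : 1 < Fintype.card K)
    (P : K → ℝ) (hP : ∀ n, 0 < P n)
    (σ2 : ℝ) (hσ : 0 < σ2)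
    (α : K → K → ℝ) (hα : ∀ n k, 0 < α n k)
    (q : K → J → K → ℝ) (hq : ∀ n j k, 0 < q n j k)
    (k : K)
    (lam : J → ℝ) (hlam : ∀ j, lam j = 0 ∨ lam j = 1)
    (hassoc : 0 < ∑ j, lam j * q k j k)
    (C D : ℝ)
    (hC : C = ∑ n ∈ Finset.univ.erase k, P n * ∑ j, (q n j k) ^ 2)
    (hD : D = σ2 + ∑ n ∈ Finset.univ.erase k, P n * (α n k) ^ 2)
    (γ : ℝ → ℝ)
    (hγ : ∀ M : ℝ, γ M =
      P k * ((α k k) ^ 2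
        + M * (∑ j, (q k j k) ^ 2
          + ∑ j, lam j * (Real.pi * Real.sqrt Real.pi * α k k / 4 * q k j k - (q k j k) ^ 2))
        + M ^ 2 * Real.pi ^ 2 / 16 * (∑ j, lam j * q k j k) ^ 2) / (D + M * C))
    (M : ℝ)
    (hM : M > 16 * (α k k) ^ 2 * C / (Real.pi ^ 2 * (∑ j, lam j * q k j k) ^ 2 * D)) :
    γ M > P k * (α k k) ^ 2 / D := by
  have hπ : (0:ℝ) < Real.pi := Real.pi_pos
  set S : ℝ := ∑ j, lam j * q k j k with hSdef
  have hS : 0 < S := hassoc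
  have hD0 : 0 < D := by
    rw [hD]
    have : (0:ℝ) ≤ ∑ n ∈ Finset.univ.erase k, P n * (α n k) ^ 2 :=
      Finset.sum_nonneg fun n _ => mul_nonneg (hP n).le (sq_nonneg _)
    linarith
  have hC0 : 0 ≤ C := by
    rw [hC]
    exact Finset.sum_nonneg fun n _ => mul_nonneg (hP n).le
      (Finset.sum_nonneg fun j _ => sq_nonneg _)
  have hthr : 0 ≤ 16 * (α k k) ^ 2 * C / (Real.pi ^ 2 * S ^ 2 * D) :=
    div_nonneg (by positivity) (by positivity)
  have hM0 : 0 < M := lt_of_le_of_lt hthr hM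
  have hM' : (α k k) ^ 2 * C < M * (Real.pi ^ 2 * S ^ 2 * D / 16) := by
    have hd : (0:ℝ) < Real.pi ^ 2 * S ^ 2 * D := by positivity
    rw [gt_iff_lt, div_lt_iff₀ hd] at hM
    nlinarith
  have hB : 0 ≤ ∑ j, (q k j k) ^ 2
      + ∑ j, lam j * (Real.pi * Real.sqrt Real.pi * α k k / 4 * q k j k - (q k j k) ^ 2) := by
    rw [← Finset.sum_add_distrib]
    refine Finset.sum_nonneg fun j _ => ?_
    rcases hlam j with h | h
    · rw [h]; simp [sq_nonneg]
    · rw [h, one_mul]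
      have hsπ : 0 < Real.sqrt Real.pi := Real.sqrt_pos.mpr hπ
      nlinarith [hq k j k, hα k k, mul_pos (mul_pos hπ hsπ) (mul_pos (hα k k) (hq k j k))]
  have hdenom : 0 < D + M * C := by nlinarith
  rw [hγ M, gt_iff_lt, div_lt_div_iff₀ hD0 hdenom]
  have hBD : 0 ≤ (∑ j, (q k j k) ^ 2
      + ∑ j, lam j * (Real.pi * Real.sqrt Real.pi * α k k / 4 * q k j k - (q k j k) ^ 2)) * D :=
    mul_nonneg hB hD0.le
  nlinarith [mul_pos (hP k) (mul_pos hM0 (sub_pos.mpr hM')),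
    mul_nonneg (mul_nonneg (hP k).le hM0.le) hBD]
end

section
/- Suppose all BSs transmit at the common power P_max > 0 and the number of IRSs satisfies J ≥ K, where J = |𝒥| and K = |𝒦|. An IRS-user association is a matrix Λ = (λ_{j,k}) with λ_{j,k} ∈ {0,1} and Σ_{k∈𝒦} λ_{j,k} ≤ 1 for each j ∈ 𝒥, and under Λ the SINR of user k with M reflecting elements per IRS is γ_k(Λ, M) = P_max·α̃²_{k,k}(λ_{·,k}, M) / (σ² + P_max Σ_{n∈𝒦,n≠k}(α²_{n,k} + M Σ_{j∈𝒥} q²_{n,j,k})). Let q²_{k,min} = min_{i∈𝒥} q²_{k,i,k}, and let γ_0 = min_{k∈𝒦} P_max α²_{k,k}/(σ² + P_max Σ_{n∈𝒦,n≠k} α²_{n,k}) be the network common SINR without IRS. If the real number M satisfies M > (16/(π² ⌊J/K⌋²))·max_{k∈𝒦} [ α²_{k,k} P_max Σ_{n∈𝒦,n≠k} Σ_{j∈𝒥} q²_{n,j,k} / ( q²_{k,min} (σ² + P_max Σ_{n∈𝒦,n≠k} α²_{n,k}) ) ], then there exists a feasible association Λ with min_{k∈𝒦} γ_k(Λ,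 M) > γ_0; in particular, the maximum of min_{k∈𝒦} γ_k(Λ, M) over all feasible associations Λ is strictly greater than γ_0. (Proposition 4.) -/
set_option maxHeartbeats 1600000 in
/-- Proposition 4: if `J ≥ K` and the number of reflecting elements per IRS satisfies
`M > (16/(π² ⌊J/K⌋²)) · max_k [α²_{k,k} P_max Σ_{n≠k} Σ_j q²_{n,j,k} /
(q²_{k,min} (σ² + P_max Σ_{n≠k} α²_{n,k}))]`, then there exists a feasible IRS-user
association `Λ` whose network common SINR `min_k γ_k(Λ, M)` strictly exceeds the
network common SINR `γ₀` of the no-IRS benchmark system. -/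
theorem stmt_9
    {K J : Type*} [Fintype K] [DecidableEq K] [Nonempty K] [Fintype J] [Nonempty J]
    (hK : 1 < Fintype.card K)
    (hJK : Fintype.card K ≤ Fintype.card J)
    (Pmax σ2 : ℝ) (hP : 0 < Pmax) (hσ : 0 < σ2)
    (α : K → K → ℝ) (hα : ∀ n k, 0 < α n k)
    (q : K → J → K → ℝ) (hq : ∀ n j k, 0 < q n j k)
    (γ : (J → K → ℝ) → ℝ → K → ℝ)
    (hγ : ∀ (Λ : J → K → ℝ) (M : ℝ) (k : K), γ Λ M k =
      Pmax * ((α k k) ^ 2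
        + M * (∑ j, (q k j k) ^ 2
          + ∑ j, Λ j k * (Real.pi * Real.sqrt Real.pi * α k k / 4 * q k j k - (q k j k) ^ 2))
        + M ^ 2 * Real.pi ^ 2 / 16 * (∑ j, Λ j k * q k j k) ^ 2)
      / (σ2 + Pmax * ∑ n ∈ Finset.univ.erase k, ((α n k) ^ 2 + M * ∑ j, (q n j k) ^ 2)))
    (γ0 : ℝ)
    (hγ0 : γ0 = ⨅ k : K,
      Pmax * (α k k) ^ 2 / (σ2 + Pmax * ∑ n ∈ Finset.univ.erase k, (α n k) ^ 2))
    (M : ℝ)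
    (hM : M > 16 / (Real.pi ^ 2 * ((Fintype.card J / Fintype.card K : ℕ) : ℝ) ^ 2)
      * ⨆ k : K, (α k k) ^ 2 * Pmax * (∑ n ∈ Finset.univ.erase k, ∑ j, (q n j k) ^ 2)
        / ((⨅ i : J, (q k i k) ^ 2)
          * (σ2 + Pmax * ∑ n ∈ Finset.univ.erase k, (α n k) ^ 2))) :
    ∃ Λ : J → K → ℝ,
      (∀ j k, Λ j k = 0 ∨ Λ j k = 1) ∧ (∀ j, ∑ k, Λ j k ≤ 1) ∧
      (⨅ k : K, γ Λ M k) > γ0 := by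
  classical
  set m : ℕ := Fintype.card J / Fintype.card K with hmdef
  have hK0 : 0 < Fintype.card K := by omega
  have hm1 : 1 ≤ m := (Nat.one_le_div_iff hK0).2 hJK
  have hcard : Fintype.card (K × Fin m) ≤ Fintype.card J := by
    rw [Fintype.card_prod, Fintype.card_fin]
    calc Fintype.card K * m = m * Fintype.card K := by ring
    _ ≤ Fintype.card J := Nat.div_mul_le_self _ _
  obtain ⟨f⟩ := Function.Embedding.nonempty_of_card_le hcard
  set Λ : J → K → ℝ := fun j k => if ∃ i : Fin m, f (k, i) = j then 1 else 0 with hΛdef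
  have hΛ01 : ∀ j k, Λ j k = 0 ∨ Λ j k = 1 := by
    intro j k
    by_cases h : ∃ i : Fin m, f (k, i) = j
    · right; simp [hΛdef, h]
    · left; simp [hΛdef, h]
  have hrow : ∀ j, ∑ k, Λ j k ≤ 1 := by
    intro j
    by_cases h : ∃ p : K × Fin m, f p = j
    · obtain ⟨⟨k0, i0⟩, hp⟩ := h
      have heq : ∀ k, Λ j k = if k = k0 then 1 else 0 := by
        intro k
        by_cases hk : k = k0
        · subst hk; simp [hΛdef]; exact ⟨i0, hp⟩
        · simp only [hΛdef, if_neg hk]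
          rw [if_neg]
          rintro ⟨i, hi⟩
          exact hk (congrArg Prod.fst (f.injective (hi.trans hp.symm)))
      calc ∑ k, Λ j k = ∑ k, if k = k0 then (1:ℝ) else 0 := by
            exact Finset.sum_congr rfl fun k _ => heq k
        _ = 1 := by simp
        _ ≤ 1 := le_refl 1
    · push_neg at h
      have : ∀ k, Λ j k = 0 := by
        intro k; simp only [hΛdef]
        rw [if_neg]
        rintro ⟨i, hi⟩; exact h (k, i) hi
      simp [this]
  refine ⟨Λ, hΛ01, hrow, ?_⟩
  -- per-user facts
  have hπ : (0:ℝ) < Real.pi := Real.pi_pos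
  have hm0 : (0:ℝ) < (m:ℝ) := by exact_mod_cast hm1
  -- key per-user strict inequality
  have key : ∀ k : K, γ0 < γ Λ M k := by
    intro k
    have hne : (Finset.univ.erase k).Nonempty := by
      rw [← Finset.card_pos, Finset.card_erase_of_mem (Finset.mem_univ k),
        Finset.card_univ]
      omega
    set D0 : ℝ := σ2 + Pmax * ∑ n ∈ Finset.univ.erase k, (α n k) ^ 2 with hD0def
    have hD0 : 0 < D0 := by
      have : (0:ℝ) ≤ ∑ n ∈ Finset.univ.erase k, (α n k) ^ 2 :=
        Finset.sum_nonneg fun n _ => sq_nonneg _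
      positivity
    set Q : ℝ := ∑ n ∈ Finset.univ.erase k, ∑ j, (q n j k) ^ 2 with hQdef
    have hQ : 0 < Q :=
      Finset.sum_pos (fun n _ => Finset.sum_pos (fun j _ => pow_pos (hq _ j k) 2)
        Finset.univ_nonempty) hne
    -- inf of q² achieved
    obtain ⟨j0, hj0⟩ := exists_eq_ciInf_of_finite (f := fun i : J => (q k i k) ^ 2)
    set r : ℝ := ⨅ i : J, (q k i k) ^ 2 with hrdef
    have hr : 0 < r := hj0 ▸ pow_pos (hq k j0 k) 2
    -- sum over selected IRSs
    have hRsum : (m : ℝ) * q k j0 k ≤ ∑ j, Λ j k * q k j k := by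
      have himg : (Finset.univ.filter (fun j => ∃ i : Fin m, f (k, i) = j)) =
          Finset.image (fun i : Fin m => f (k, i)) Finset.univ := by
        ext j
        simp [eq_comm]
      have hinj : ∀ a ∈ (Finset.univ : Finset (Fin m)), ∀ b ∈ Finset.univ,
          f (k, a) = f (k, b) → a = b := by
        intro a _ b _ hab
        exact congrArg Prod.snd (f.injective hab)
      have h1 : ∑ j, Λ j k * q k j k
          = ∑ i : Fin m, q k (f (k, i)) k := by
        rw [hΛdef]
        simp only [ite_mul, one_mul, zero_mul]
        rw [Finset.sum_ite, Finset.sum_const_zero, add_zero, himg,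
          Finset.sum_image hinj]
      rw [h1]
      have hle : ∀ i : Fin m, q k j0 k ≤ q k (f (k, i)) k := by
        intro i
        have h2 : (q k j0 k) ^ 2 ≤ (q k (f (k, i)) k) ^ 2 := by
          rw [hj0]
          exact ciInf_le (Set.Finite.bddBelow (Set.finite_range _)) _
        nlinarith [hq k j0 k, hq k (f (k, i)) k]
      calc (m : ℝ) * q k j0 k = ∑ _i : Fin m, q k j0 k := by
            simp [Finset.sum_const, nsmul_eq_mul]
        _ ≤ ∑ i : Fin m, q k (f (k, i)) k := Finset.sum_le_sum fun i _ => hle i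
    set R : ℝ := ∑ j, Λ j k * q k j k with hRdef
    have hR0 : 0 < R := lt_of_lt_of_le (mul_pos hm0 (hq k j0 k)) hRsum
    have hR2 : (m:ℝ) ^ 2 * r ≤ R ^ 2 := by
      rw [← hj0]
      nlinarith [mul_nonneg (sub_nonneg.2 hRsum)
        (add_pos hR0 (mul_pos hm0 (hq k j0 k))).le]
    -- M bound
    have hsup := le_ciSup (f := fun k : K => (α k k) ^ 2 * Pmax
        * (∑ n ∈ Finset.univ.erase k, ∑ j, (q n j k) ^ 2)
        / ((⨅ i : J, (q k i k) ^ 2)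
          * (σ2 + Pmax * ∑ n ∈ Finset.univ.erase k, (α n k) ^ 2)))
      (Set.Finite.bddAbove (Set.finite_range _)) k
    have hsup' : (α k k) ^ 2 * Pmax * Q / (r * D0) ≤
        ⨆ k : K, (α k k) ^ 2 * Pmax * (∑ n ∈ Finset.univ.erase k, ∑ j, (q n j k) ^ 2)
          / ((⨅ i : J, (q k i k) ^ 2)
            * (σ2 + Pmax * ∑ n ∈ Finset.univ.erase k, (α n k) ^ 2)) := hsup
    have hc : (0:ℝ) < 16 / (Real.pi ^ 2 * (m:ℝ) ^ 2) := by positivity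
    have hMt : 16 / (Real.pi ^ 2 * (m:ℝ) ^ 2) * ((α k k) ^ 2 * Pmax * Q / (r * D0)) < M :=
      lt_of_le_of_lt (mul_le_mul_of_nonneg_left hsup' hc.le) hM
    have hM0 : 0 < M := lt_trans (mul_pos hc (div_pos
      (mul_pos (mul_pos (pow_pos (hα k k) 2) hP) hQ) (mul_pos hr hD0))) hMt
    have hkey : (α k k) ^ 2 * Pmax * Q < M * Real.pi ^ 2 / 16 * R ^ 2 * D0 := by
      have he : (0:ℝ) < Real.pi ^ 2 * (m:ℝ) ^ 2 * r * D0 / 16 := by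
        have := hr; have := hD0; positivity
      have heq : 16 / (Real.pi ^ 2 * (m:ℝ) ^ 2) * ((α k k) ^ 2 * Pmax * Q / (r * D0))
          = ((α k k) ^ 2 * Pmax * Q) / (Real.pi ^ 2 * (m:ℝ) ^ 2 * r * D0 / 16) := by
        rw [div_mul_div_comm, div_eq_div_iff (by positivity) (by positivity)]
        ring
      rw [heq] at hMt
      have h3 : (α k k) ^ 2 * Pmax * Q < M * (Real.pi ^ 2 * (m:ℝ) ^ 2 * r * D0 / 16) :=
        (div_lt_iff₀ he).mp hMt
      nlinarith [mul_le_mul_of_nonneg_left hR2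
        (by positivity : (0:ℝ) ≤ M * Real.pi ^ 2 * D0 / 16)]
    -- S + T positive
    have hST : 0 < ∑ j, (q k j k) ^ 2
        + ∑ j, Λ j k * (Real.pi * Real.sqrt Real.pi * α k k / 4 * q k j k - (q k j k) ^ 2) := by
      rw [← Finset.sum_add_distrib]
      refine Finset.sum_pos (fun j _ => ?_) Finset.univ_nonempty
      rcases hΛ01 j k with h | h
      · rw [h]; simpa using pow_pos (hq k j k) 2
      · rw [h, one_mul]
        have hs : 0 < Real.sqrt Real.pi := Real.sqrt_pos.2 hπ
        have h4 : 0 < Real.pi * Real.sqrt Real.pi * α k k / 4 * q k j k :=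
          mul_pos (div_pos (mul_pos (mul_pos hπ hs) (hα k k)) (by norm_num)) (hq k j k)
        linarith
    -- denominator identity
    have hDen : σ2 + Pmax * ∑ n ∈ Finset.univ.erase k, ((α n k) ^ 2 + M * ∑ j, (q n j k) ^ 2)
        = D0 + M * Pmax * Q := by
      rw [hD0def, hQdef, Finset.sum_add_distrib, ← Finset.mul_sum]
      ring
    have hD : 0 < D0 + M * Pmax * Q := add_pos hD0 (mul_pos (mul_pos hM0 hP) hQ)
    -- γ0 ≤ benchmark at k
    have hγ0le : γ0 ≤ Pmax * (α k k) ^ 2 / D0 := by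
      rw [hγ0]
      exact ciInf_le (Set.Finite.bddBelow (Set.finite_range _)) k
    refine lt_of_le_of_lt hγ0le ?_
    rw [hγ Λ M k, hDen]
    rw [div_lt_div_iff₀ hD0 hD]
    nlinarith [mul_pos (mul_pos hP hM0) (mul_pos hST hD0),
      mul_lt_mul_of_pos_left hkey (mul_pos hP hM0)]
  obtain ⟨k0, hk0⟩ := exists_eq_ciInf_of_finite (f := fun k : K => γ Λ M k)
  rw [← hk0]
  exact key k0
end

section
/- Fix a user k ∈ 𝒦, an IRS j₀ ∈ 𝒥, a real number M ≥ 2, and an association vector λ ∈ {0,1}^𝒥 with λ_{j₀} = 0. Let λ' be obtained from λ by setting λ'_{j₀} = 1 (and λ'_j = λ_j for j ≠ j₀). Then α̃²_{k,k}(λ', M) > α̃²_{k,k}(λ, M). Consequently, since the interference-plus-noise term σ² + Σ_{n∈𝒦,n≠k} P_n(α²_{n,k} + M Σ_{j∈𝒥} q²_{n,j,k}) does not depend on the association, assigning an IRS from user k' to user k strictly increases the SINR of user k and strictly decreases the SINR of user k'. (Proposition 5.) -/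
/-- Proposition 5: for `M ≥ 2`, associating one additional IRS `j₀` with user `k`
strictly increases its effective channel power `α̃²_{k,k}`, hence (since the
interference-plus-noise term does not depend on the association) strictly increases
the SINR of user `k`; correspondingly, removing IRS `j₀` from user `k'` strictly
decreases the SINR of user `k'`. -/
theorem stmt_12
    {K J : Type*} [Fintype K] [DecidableEq K] [Fintype J] [DecidableEq J] [Nonempty J]
    (hK : 1 < Fintype.card K)
    (P : K → ℝ) (hP : ∀ n, 0 < P n)
    (σ2 : ℝ) (hσ : 0 < σ2)
    (α : K → K → ℝ) (hα : ∀ n k, 0 < α n k)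
    (q : K → J → K → ℝ) (hq : ∀ n j k, 0 < q n j k)
    (k k' : K) (hkk' : k ≠ k') (j0 : J) (M : ℝ) (hM : 2 ≤ M)
    (lam : J → ℝ) (hlam : ∀ j, lam j = 0 ∨ lam j = 1) (hlam0 : lam j0 = 0)
    (mu : J → ℝ) (hmu : ∀ j, mu j = 0 ∨ mu j = 1) (hmu1 : mu j0 = 1)
    (effCh : K → (J → ℝ) → ℝ)
    (heff : ∀ (u : K) (lamv : J → ℝ), effCh u lamv =
      (α u u) ^ 2
      + M * (∑ j, (q u j u) ^ 2
        + ∑ j, lamv j * (Real.pi * Real.sqrt Real.pi * α u u / 4 * q u j u - (q u j u) ^ 2))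
      + M ^ 2 * Real.pi ^ 2 / 16 * (∑ j, lamv j * q u j u) ^ 2)
    (γ : K → (J → ℝ) → ℝ)
    (hγ : ∀ (u : K) (lamv : J → ℝ), γ u lamv =
      P u * effCh u lamv
      / (σ2 + ∑ n ∈ Finset.univ.erase u, P n * ((α n u) ^ 2 + M * ∑ j, (q n j u) ^ 2))) :
    effCh k (Function.update lam j0 1) > effCh k lam ∧
    γ k (Function.update lam j0 1) > γ k lam ∧
    γ k' (Function.update mu j0 0) < γ k' mu := by
  have hMpos : (0:ℝ) < M := lt_of_lt_of_le two_pos hM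
  -- sum with an update splits off the j0 term
  have hupd : ∀ (lv : J → ℝ), lv j0 = 0 → ∀ w : J → ℝ,
      (∑ j, Function.update lv j0 1 j * w j) = (∑ j, lv j * w j) + w j0 := by
    intro lv h0 w
    rw [← Finset.sum_erase_add _ _ (Finset.mem_univ j0),
        show (∑ j, lv j * w j) = ∑ x ∈ Finset.univ.erase j0, lv x * w x + lv j0 * w j0
          from (Finset.sum_erase_add _ _ (Finset.mem_univ j0)).symm]
    have h1 : ∀ j ∈ Finset.univ.erase j0,
        Function.update lv j0 1 j * w j = lv j * w j := by
      intro j hj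
      rw [Function.update_of_ne (Finset.ne_of_mem_erase hj)]
    rw [Finset.sum_congr rfl h1, Function.update_self, h0]
    ring
  -- main monotonicity fact
  have main : ∀ (u : K) (lv : J → ℝ), (∀ j, lv j = 0 ∨ lv j = 1) → lv j0 = 0 →
      effCh u lv < effCh u (Function.update lv j0 1) := by
    intro u lv hlv h0
    rw [heff, heff,
      hupd lv h0 (fun j => Real.pi * Real.sqrt Real.pi * α u u / 4 * q u j u - (q u j u) ^ 2),
      hupd lv h0 (fun j => q u j u)]
    have hS : (0:ℝ) ≤ ∑ j, lv j * q u j u := by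
      refine Finset.sum_nonneg fun j _ => ?_
      rcases hlv j with h | h <;> simp [h] <;> exact (hq u j u).le
    have hπ : (3:ℝ) < Real.pi := Real.pi_gt_three
    have hsπ : (1:ℝ) < Real.sqrt Real.pi := by
      rw [show (1:ℝ) = Real.sqrt 1 from (Real.sqrt_one).symm]
      exact Real.sqrt_lt_sqrt (by norm_num) (by linarith)
    have hq0 := hq u j0 u
    have hα0 := hα u u
    set S := ∑ j, lv j * q u j u with hSdef
    have hπ2 : (9:ℝ) < Real.pi ^ 2 := by nlinarith
    have h2 : M < M ^ 2 * Real.pi ^ 2 / 16 := by nlinarith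
    have hA : 0 < M * (Real.pi * Real.sqrt Real.pi * α u u / 4 * q u j0 u) := by
      have := Real.pi_pos
      have h1 : (0:ℝ) < Real.sqrt Real.pi := by linarith
      positivity
    have hB : M * (q u j0 u) ^ 2 < M ^ 2 * Real.pi ^ 2 / 16 * (q u j0 u) ^ 2 :=
      mul_lt_mul_of_pos_right h2 (pow_pos hq0 2)
    have hC : 0 ≤ M ^ 2 * Real.pi ^ 2 / 16 * (2 * S * q u j0 u) := by positivity
    nlinarith [hA, hB, hC]
  -- denominator positivity
  have hden : ∀ u : K, 0 < σ2 + ∑ n ∈ Finset.univ.erase u,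
      P n * ((α n u) ^ 2 + M * ∑ j, (q n j u) ^ 2) := by
    intro u
    have : (0:ℝ) ≤ ∑ n ∈ Finset.univ.erase u,
        P n * ((α n u) ^ 2 + M * ∑ j, (q n j u) ^ 2) := by
      refine Finset.sum_nonneg fun n _ => ?_
      have h1 : (0:ℝ) ≤ ∑ j, (q n j u) ^ 2 :=
        Finset.sum_nonneg fun j _ => sq_nonneg _
      have := (hP n).le
      positivity
    linarith
  have hγmono : ∀ (u : K) (lv : J → ℝ), (∀ j, lv j = 0 ∨ lv j = 1) → lv j0 = 0 →
      γ u lv < γ u (Function.update lv j0 1) := by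
    intro u lv hlv h0
    rw [hγ, hγ]
    exact (div_lt_div_iff_of_pos_right (hden u)).mpr
      (mul_lt_mul_of_pos_left (main u lv hlv h0) (hP u))
  refine ⟨main k lam hlam hlam0, hγmono k lam hlam hlam0, ?_⟩
  set ν : J → ℝ := Function.update mu j0 0 with hν
  have hν0 : ν j0 = 0 := Function.update_self _ _ _
  have hνbin : ∀ j, ν j = 0 ∨ ν j = 1 := by
    intro j
    by_cases hj : j = j0
    · subst hj; left; exact hν0
    · rw [hν, Function.update_of_ne hj]; exact hmu j
  have hmueq : mu = Function.update ν j0 1 := by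
    funext j
    by_cases hj : j = j0
    · subst hj; rw [Function.update_self, hmu1]
    · rw [Function.update_of_ne hj, hν, Function.update_of_ne hj]
  rw [hmueq]
  exact hγmono k' ν hνbin hν0
end

section
/- For each user k ∈ 𝒦 and positive power vector P = (P_n)_{n∈𝒦}, define γ_k(Λ, P) = P_k·α̃²_{k,k}(λ_{·,k}, M) / (σ² + Σ_{n∈𝒦,n≠k} P_n ν²_{n,k}), where ν²_{n,k} = α²_{n,k} + M Σ_{j∈𝒥} q²_{n,j,k} does not depend on the association Λ. Let Λ¹, Λ² be two IRS-user associations and P¹ a positive power vector. If γ_k(Λ², P¹) > γ_k(Λ¹, P¹) for every k ∈ 𝒦, then α̃²_{k,k}(λ²_{·,k}, M) > α̃²_{k,k}(λ¹_{·,k}, M) for every k ∈ 𝒦, and consequently, for every positive power vector P⁰, γ_k(Λ², P⁰) > γ_k(Λ¹, P⁰) for every k ∈ 𝒦 (hence min_{k∈𝒦} γ_k(Λ², P⁰) > min_{k∈𝒦} γ_k(Λ¹, P⁰)). (Key claim of Appendix A, which implies Proposition 1: the alternating-optimization algorithm for (P2) terminates with the IRS-user associations updated at most once.) -/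
/-- Key claim of Appendix A (implying Proposition 1): if under some positive power vector
`P¹` every user's SINR is strictly larger under association `Λ²` than under `Λ¹`, then
every user's effective channel power is strictly larger under `Λ²`, and consequently the
same strict SINR dominance (hence dominance of the network common SINR) holds under
every positive power vector `P⁰`. -/
theorem stmt_14
    {K J : Type*} [Fintype K] [DecidableEq K] [Nonempty K] [Fintype J] [Nonempty J]
    (hK : 1 < Fintype.card K)
    (σ2 : ℝ) (hσ : 0 < σ2)
    (α : K → K → ℝ) (hα : ∀ n k, 0 < α n k)
    (q : K → J → K → ℝ) (hq : ∀ n j k, 0 < q n j k)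
    (M : ℝ) (hM : 0 < M)
    (effCh : K → (J → ℝ) → ℝ)
    (heff : ∀ (u : K) (lamv : J → ℝ), effCh u lamv =
      (α u u) ^ 2
      + M * (∑ j, (q u j u) ^ 2
        + ∑ j, lamv j * (Real.pi * Real.sqrt Real.pi * α u u / 4 * q u j u - (q u j u) ^ 2))
      + M ^ 2 * Real.pi ^ 2 / 16 * (∑ j, lamv j * q u j u) ^ 2)
    (γ : (J → K → ℝ) → (K → ℝ) → K → ℝ)
    (hγ : ∀ (Λ : J → K → ℝ) (P : K → ℝ) (u : K), γ Λ P u =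
      P u * effCh u (fun j => Λ j u)
      / (σ2 + ∑ n ∈ Finset.univ.erase u, P n * ((α n u) ^ 2 + M * ∑ j, (q n j u) ^ 2)))
    (Λ1 Λ2 : J → K → ℝ)
    (hΛ1 : ∀ j u, Λ1 j u = 0 ∨ Λ1 j u = 1) (hΛ1sum : ∀ j, ∑ u, Λ1 j u ≤ 1)
    (hΛ2 : ∀ j u, Λ2 j u = 0 ∨ Λ2 j u = 1) (hΛ2sum : ∀ j, ∑ u, Λ2 j u ≤ 1)
    (P1 : K → ℝ) (hP1 : ∀ u, 0 < P1 u)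
    (hdom : ∀ u : K, γ Λ2 P1 u > γ Λ1 P1 u) :
    (∀ u : K, effCh u (fun j => Λ2 j u) > effCh u (fun j => Λ1 j u)) ∧
    (∀ P0 : K → ℝ, (∀ u, 0 < P0 u) →
      (∀ u : K, γ Λ2 P0 u > γ Λ1 P0 u) ∧
      (⨅ u : K, γ Λ2 P0 u) > ⨅ u : K, γ Λ1 P0 u) := by
  have hD : ∀ (P : K → ℝ), (∀ u, 0 < P u) → ∀ u : K,
      0 < σ2 + ∑ n ∈ Finset.univ.erase u, P n * ((α n u) ^ 2 + M * ∑ j, (q n j u) ^ 2) := by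
    intro P hP u
    have hsum : 0 ≤ ∑ n ∈ Finset.univ.erase u, P n * ((α n u) ^ 2 + M * ∑ j, (q n j u) ^ 2) := by
      apply Finset.sum_nonneg
      intro n _
      have h0 : 0 ≤ ∑ j, (q n j u) ^ 2 := Finset.sum_nonneg fun j _ => sq_nonneg _
      have h1 : 0 ≤ (α n u) ^ 2 + M * ∑ j, (q n j u) ^ 2 := by nlinarith [sq_nonneg (α n u)]
      exact mul_nonneg (hP n).le h1
    linarith
  have heffgt : ∀ u : K, effCh u (fun j => Λ2 j u) > effCh u (fun j => Λ1 j u) := by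
    intro u
    have h := hdom u
    rw [hγ, hγ] at h
    have hDp := hD P1 hP1 u
    have h2 : P1 u * effCh u (fun j => Λ1 j u) < P1 u * effCh u (fun j => Λ2 j u) := by
      exact (div_lt_div_iff_of_pos_right hDp).mp h
    exact lt_of_mul_lt_mul_left h2 (hP1 u).le
  have hγgt : ∀ (P0 : K → ℝ), (∀ u, 0 < P0 u) → ∀ u : K, γ Λ2 P0 u > γ Λ1 P0 u := by
    intro P0 hP0 u
    rw [hγ, hγ]
    have hDp := hD P0 hP0 u
    apply div_lt_div_of_pos_right ?_ hDp
    exact mul_lt_mul_of_pos_left (heffgt u) (hP0 u)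
  refine ⟨heffgt, fun P0 hP0 => ⟨hγgt P0 hP0, ?_⟩⟩
  obtain ⟨u0, hu0⟩ := Finite.exists_min (γ Λ2 P0)
  have h1 : (⨅ u : K, γ Λ1 P0 u) ≤ γ Λ1 P0 u0 :=
    ciInf_le (Set.Finite.bddBelow (Set.finite_range _)) u0
  have h2 : γ Λ2 P0 u0 ≤ ⨅ u : K, γ Λ2 P0 u := le_ciInf hu0
  exact lt_of_lt_of_le (lt_of_le_of_lt h1 (hγgt P0 hP0 u0)) h2
end
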